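/- For every real δ with 0 < δ < 1, there exist constants C ≥ 1, c > 0 and s > 0, and a strictly increasing sequence (n_i) of integers with n_i ≥ 2 satisfying log n_{i+1} ≤ C · log n_i for all i, such that for every i there exist a natural number d ≤ (log n_i)^s, finite sets A, B of vectors in (Fin d → Bool) with |A| = |B| = n_i, a set E ⊆ A × B with |E| ≥ c · n_i^{2−δ}, and a positive integer β such that: every pair (a, b) ∈ E has inner product ⟨a, b⟩ = β; every pair (a, b) ∈ (A × B) \ E has ⟨a, b⟩ < β; and any two distinct vectors both in A or both in B have inner product strictly less than β/3. -/

import Mathlib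

open Polynomial Finset

/-- The inner product of two Boolean vectors: the number of coordinates where both
are `true`. -/
def boolIP {d : ℕ} (u v : Fin d → Bool) : ℕ :=
  (Finset.univ.filter (fun i => u i = true ∧ v i = true)).card

namespace Stmt9

variable {q : ℕ} [Fact (Nat.Prime q)]

abbrev K (q : ℕ) := ZMod q

noncomputable def e (q : ℕ) [Fact (Nat.Prime q)] : Fin (q*q) ≃ (K q × K q) :=
  Fintype.equivOfCardEq (by simp [ZMod.card])

noncomputable def vec (q : ℕ) [Fact (Nat.Prime q)] (p : (K q)[X]) : Fin (q*q) → Bool :=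
  fun i => decide (p.eval (e q i).1 = (e q i).2)

/-- coefficient polynomial from a vector -/
noncomputable def pc {k : ℕ} (c : Fin k → K q) : (K q)[X] :=
  ∑ j : Fin k, C (c j) * X ^ (j : ℕ)

lemma coeff_pc {k : ℕ} (c : Fin k → K q) (m : ℕ) :
    (pc c).coeff m = if h : m < k then c ⟨m, h⟩ else 0 := by
  rw [pc, finset_sum_coeff]
  split_ifs with h
  · rw [Finset.sum_eq_single (⟨m, h⟩ : Fin k)]
    · simp
    · intro b _ hb
      rw [coeff_C_mul, coeff_X_pow, if_neg, mul_zero]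
      exact fun hc => hb (by ext; simp [hc])
    · simp
  · apply Finset.sum_eq_zero
    intro b _
    rw [coeff_C_mul, coeff_X_pow, if_neg, mul_zero]
    rintro rfl
    exact h b.2

lemma pc_inj {k : ℕ} : Function.Injective (pc (q := q) (k := k)) := by
  intro c c' h
  funext j
  have := congrArg (fun p => Polynomial.coeff p (j : ℕ)) h
  simpa [coeff_pc, j.2] using this

lemma pc_sub {k : ℕ} (c c' : Fin k → K q) : pc c - pc c' = pc (c - c') := by
  simp [pc, Finset.sum_sub_distrib, sub_mul, map_sub]

lemma coeff_pc_eq_zero {k : ℕ} (c : Fin k → K q) {m : ℕ} (h : k ≤ m) :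
    (pc c).coeff m = 0 := by
  rw [coeff_pc, dif_neg (by omega)]

lemma natDegree_pc_lt {k : ℕ} (hk : 1 ≤ k) (c : Fin k → K q) : (pc c).natDegree < k := by
  by_cases h : pc c = 0
  · simp [h]; omega
  · rw [natDegree_lt_iff_degree_lt h, degree_lt_iff_coeff_zero]
    intro m hm
    exact coeff_pc_eq_zero c (by exact_mod_cast hm)

/-- a polynomial with vanishing coefficients above `k` is `pc` of its coefficients -/
lemma pc_of_coeff {k : ℕ} (w : (K q)[X]) (hw : ∀ m, k ≤ m → w.coeff m = 0) :
    pc (fun j : Fin k => w.coeff j) = w := by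
  ext m
  rw [coeff_pc]
  split_ifs with h
  · rfl
  · exact (hw m (by omega)).symm

lemma ip_eq (p p' : (K q)[X]) :
    boolIP (vec q p) (vec q p') = (univ.filter fun x : K q => (p - p').eval x = 0).card := by
  rw [boolIP]
  apply Finset.card_bij' (fun i _ => (e q i).1)
    (fun x _ => (e q).symm (x, p.eval x))
  · intro i hi
    simp only [mem_filter, mem_univ, true_and, vec, decide_eq_true_eq] at hi
    simp only [mem_filter, mem_univ, true_and, eval_sub]
    rw [hi.1, hi.2]; ring
  · intro x hx
    simp only [mem_filter, mem_univ, true_and, eval_sub, sub_eq_zero] at hx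
    simp only [mem_filter, mem_univ, true_and, vec, decide_eq_true_eq, Equiv.apply_symm_apply]
    first
    | exact ⟨rfl, hx.symm⟩
    | exact hx.symm
  · intro i hi
    simp only [mem_filter, mem_univ, true_and, vec, decide_eq_true_eq] at hi
    rw [hi.1]
    simp
  · intro x hx
    simp

lemma card_roots_le (h : (K q)[X]) (h0 : h ≠ 0) :
    (univ.filter fun x : K q => h.eval x = 0).card ≤ h.natDegree := by
  have hsub : (univ.filter fun x : K q => h.eval x = 0) ⊆ h.roots.toFinset := by
    intro x hx
    simp only [mem_filter, mem_univ, true_and] at hx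
    rw [Multiset.mem_toFinset, mem_roots h0]
    exact hx
  calc (univ.filter fun x : K q => h.eval x = 0).card ≤ h.roots.toFinset.card :=
        Finset.card_le_card hsub
    _ ≤ Multiset.card h.roots := h.roots.toFinset_card_le
    _ ≤ h.natDegree := h.card_roots'

noncomputable def hS (S : Finset (K q)) : (K q)[X] := ∏ x ∈ S, (X - C x)

lemma hS_monic (S : Finset (K q)) : (hS S).Monic :=
  monic_prod_of_monic _ _ (fun x _ => monic_X_sub_C x)

lemma hS_natDegree (S : Finset (K q)) : (hS S).natDegree = S.card := by
  rw [hS, natDegree_prod_of_monic _ _ (fun x _ => monic_X_sub_C x)]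
  simp

lemma hS_roots (S : Finset (K q)) :
    (univ.filter fun x : K q => (hS S).eval x = 0) = S := by
  ext y
  simp only [mem_filter, mem_univ, true_and, hS, eval_prod, eval_sub, eval_X, eval_C,
    Finset.prod_eq_zero_iff, sub_eq_zero]
  constructor
  · rintro ⟨x, hx, rfl⟩; exact hx
  · intro hy; exact ⟨y, hy, rfl⟩

lemma vec_inj {p p' : (K q)[X]} (hp : p.natDegree < q) (hp' : p'.natDegree < q)
    (h : vec q p = vec q p') : p = p' := by
  have heval : ∀ x : K q, p.eval x = p'.eval x := by
    intro x
    have hx := congrFun h ((e q).symm (x, p.eval x))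
    simp only [vec, Equiv.apply_symm_apply] at hx
    have h2 : eval x p' = eval x p := of_decide_eq_true (by simpa using hx.symm)
    exact h2.symm
  by_contra hne
  have hsub : p - p' ≠ 0 := sub_ne_zero.mpr hne
  have h1 : (univ.filter fun x : K q => (p - p').eval x = 0).card = q := by
    rw [Finset.filter_true_of_mem, Finset.card_univ, ZMod.card]
    intro x _
    simp [heval x]
  have h2 := card_roots_le (p - p') hsub
  rw [h1] at h2
  have h3 : (p - p').natDegree < q :=
    lt_of_le_of_lt (natDegree_sub_le p p') (max_lt hp hp')
  omega


noncomputable def Pv (q k : ℕ) [Fact (Nat.Prime q)] (v : Fin (2*k+1) → K q) : (K q)[X] :=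
  ∑ j : Fin (2*k+1), C (v j) * X ^ (k + (j : ℕ))

lemma coeff_Pv (k : ℕ) (v : Fin (2*k+1) → K q) (n : ℕ) :
    (Pv q k v).coeff n =
      if h : k ≤ n ∧ n - k < 2*k+1 then v ⟨n - k, h.2⟩ else 0 := by
  rw [Pv, finset_sum_coeff]
  split_ifs with h
  · rw [Finset.sum_eq_single (⟨n - k, h.2⟩ : Fin (2*k+1))]
    · rw [coeff_C_mul, coeff_X_pow, if_pos (by simp only [Fin.val_mk]; omega), mul_one]
    · intro b _ hb
      rw [coeff_C_mul, coeff_X_pow, if_neg, mul_zero]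
      intro hc
      exact hb (by ext; simp; omega)
    · simp
  · apply Finset.sum_eq_zero
    intro b _
    rw [coeff_C_mul, coeff_X_pow, if_neg, mul_zero]
    intro hc
    omega

theorem core (q k N : ℕ) [Fact (Nat.Prime q)] (hk : 1 ≤ k) (h3k : 3*k < q)
    (hN : 1 ≤ N) (hcount : q ^ (2*k+1) * N ≤ Nat.choose q (3*k)) :
    ∃ (A B : Finset (Fin (q*q) → Bool))
      (E : Finset ((Fin (q*q) → Bool) × (Fin (q*q) → Bool))),
      A.card = q ^ k ∧ B.card = q ^ k ∧ E ⊆ A ×ˢ B ∧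
      q ^ k * N ≤ E.card ∧
      (∀ ab ∈ E, boolIP ab.1 ab.2 = 3*k) ∧
      (∀ a ∈ A, ∀ b ∈ B, (a, b) ∉ E → boolIP a b < 3*k) ∧
      (∀ a ∈ A, ∀ a' ∈ A, a ≠ a' → 3 * boolIP a a' < 3*k) ∧
      (∀ b ∈ B, ∀ b' ∈ B, b ≠ b' → 3 * boolIP b b' < 3*k) := by
  classical
  have hq2 : 2 ≤ q := (Fact.out : Nat.Prime q).two_le
  -- pigeonhole to find a good high-coefficient pattern
  set s0 : Finset (Finset (K q)) := (univ : Finset (K q)).powersetCard (3*k) with hs0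
  set f : Finset (K q) → (Fin (2*k+1) → K q) :=
    fun S => fun j => (hS S).coeff (k + (j : ℕ)) with hf
  have hs0card : s0.card = Nat.choose q (3*k) := by
    rw [hs0, card_powersetCard, card_univ, ZMod.card]
  have htcard : (univ : Finset (Fin (2*k+1) → K q)).card = q ^ (2*k+1) := by
    simp [card_univ, ZMod.card]
  obtain ⟨v, -, hv⟩ :=
    Finset.exists_le_card_fiber_of_mul_le_card_of_maps_to
      (f := f) (s := s0) (t := univ) (fun a _ => mem_univ _)
      ⟨_, mem_univ (fun _ => (0 : K q))⟩
      (by rw [htcard, hs0card]; exact hcount)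
  set F : Finset (Finset (K q)) := s0.filter (fun S => f S = v) with hF
  have hFcard : N ≤ F.card := hv
  have hFne : F.Nonempty := Finset.card_pos.mp (lt_of_lt_of_le hN hFcard)
  obtain ⟨S₀, hS₀⟩ := hFne
  have hmemF : ∀ S ∈ F, S.card = 3*k ∧ f S = v := by
    intro S hS'
    rw [hF, mem_filter, hs0, Finset.mem_powersetCard] at hS'
    exact ⟨hS'.1.2, hS'.2⟩
  -- top coefficient of the pattern is 1
  have hvtop : v ⟨2*k, by omega⟩ = 1 := by
    obtain ⟨hc0, hf0⟩ := hmemF S₀ hS₀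
    rw [← hf0, hf]
    have : k + 2*k = (hS S₀).natDegree := by rw [hS_natDegree, hc0]; omega
    simp only [this]
    exact (hS_monic S₀)
  set P : (K q)[X] := Pv q k v with hP
  have hPcoeff : ∀ n, P.coeff n =
      if h : k ≤ n ∧ n - k < 2*k+1 then v ⟨n - k, h.2⟩ else 0 := coeff_Pv k v
  have hPtop : P.coeff (3*k) = 1 := by
    rw [hPcoeff, dif_pos (by omega)]
    convert hvtop using 3
    omega
  have hPhigh : ∀ n, 3*k < n → P.coeff n = 0 := by
    intro n hn
    rw [hPcoeff, dif_neg (by omega)]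
  have hPdeg : P.natDegree = 3*k := by
    apply le_antisymm
    · exact natDegree_le_iff_coeff_eq_zero.mpr (fun n hn => hPhigh n hn)
    · exact le_natDegree_of_ne_zero (by rw [hPtop]; exact one_ne_zero)
  -- the low-degree remainders
  set r : Finset (K q) → (K q)[X] := fun S => hS S - P with hr
  have hrlow : ∀ S ∈ F, ∀ n, k ≤ n → (r S).coeff n = 0 := by
    intro S hSF n hn
    obtain ⟨hc0, hf0⟩ := hmemF S hSF
    rw [hr]
    simp only [coeff_sub]
    rcases le_or_gt n (3*k) with h' | h'
    · have hj : n - k < 2*k+1 := by omega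
      rw [hPcoeff, dif_pos ⟨hn, hj⟩]
      have hcf := congrFun hf0 ⟨n - k, hj⟩
      rw [hf] at hcf
      simp only [Fin.val_mk] at hcf
      rw [show k + (n - k) = n from by omega] at hcf
      rw [hcf, sub_self]
    · rw [hPhigh n h', coeff_eq_zero_of_natDegree_lt (by rw [hS_natDegree, hc0]; omega)]
      ring
  set rc : Finset (K q) → (Fin k → K q) := fun S j => (r S).coeff (j : ℕ) with hrc
  have hpcrc : ∀ S ∈ F, pc (rc S) = r S := fun S hSF => pc_of_coeff _ (hrlow S hSF)
  -- degree bounds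
  have hkq : k < q := by omega
  have hdegA : ∀ c : Fin k → K q, (pc c).natDegree < q := by
    intro c
    have := natDegree_pc_lt hk c
    omega
  have hdegB : ∀ c : Fin k → K q, (pc c - P).natDegree < q := by
    intro c
    refine lt_of_le_of_lt (natDegree_sub_le _ _) ?_
    rw [hPdeg]
    exact max_lt (by have := natDegree_pc_lt hk c; omega) h3k
  have hinjA : Function.Injective (fun c : Fin k → K q => vec q (pc c)) := by
    intro c c' h
    exact pc_inj (vec_inj (hdegA c) (hdegA c') h)
  have hinjB : Function.Injective (fun c : Fin k → K q => vec q (pc c - P)) := by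
    intro c c' h
    have := vec_inj (hdegB c) (hdegB c') h
    exact pc_inj (by linear_combination (norm := ring_nf) this)
  set A : Finset (Fin (q*q) → Bool) := univ.image (fun c : Fin k → K q => vec q (pc c))
    with hA
  set B : Finset (Fin (q*q) → Bool) := univ.image (fun c : Fin k → K q => vec q (pc c - P))
    with hB
  set E : Finset ((Fin (q*q) → Bool) × (Fin (q*q) → Bool)) :=
    ((univ ×ˢ univ).filter (fun cc : (Fin k → K q) × (Fin k → K q) =>
        boolIP (vec q (pc cc.1)) (vec q (pc cc.2 - P)) = 3*k)).image
      (fun cc => (vec q (pc cc.1), vec q (pc cc.2 - P))) with hE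
  have hcardfun : Fintype.card (Fin k → K q) = q ^ k := by simp [ZMod.card]
  have hAcard : A.card = q ^ k := by
    rw [hA, Finset.card_image_of_injective _ hinjA, card_univ, hcardfun]
  have hBcard : B.card = q ^ k := by
    rw [hB, Finset.card_image_of_injective _ hinjB, card_univ, hcardfun]
  have hEsub : E ⊆ A ×ˢ B := by
    rw [hE]
    intro ab hab
    obtain ⟨cc, _, rfl⟩ := Finset.mem_image.mp hab
    rw [Finset.mem_product]
    exact ⟨Finset.mem_image_of_mem _ (mem_univ _), Finset.mem_image_of_mem _ (mem_univ _)⟩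
  -- cross-pair degree
  have hcross : ∀ c c' : Fin k → K q, pc c - (pc c' - P) = pc (c - c') + P := by
    intro c c'
    rw [← pc_sub]
    ring
  have hcrossdeg : ∀ c c' : Fin k → K q, (pc c - (pc c' - P)).natDegree = 3*k := by
    intro c c'
    rw [hcross]
    rw [natDegree_add_eq_right_of_natDegree_lt]
    · exact hPdeg
    · rw [hPdeg]
      have := natDegree_pc_lt hk (c - c')
      omega
  have hcrossne : ∀ c c' : Fin k → K q, pc c - (pc c' - P) ≠ 0 := by
    intro c c' h0
    have := hcrossdeg c c'
    rw [h0] at this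
    simp at this
    omega
  -- membership in E characterization
  have hEmem : ∀ c c' : Fin k → K q,
      ((vec q (pc c), vec q (pc c' - P)) ∈ E ↔
        boolIP (vec q (pc c)) (vec q (pc c' - P)) = 3*k) := by
    intro c c'
    constructor
    · intro h
      rw [hE] at h
      obtain ⟨cc, hcc, heq⟩ := Finset.mem_image.mp h
      rw [Finset.mem_filter] at hcc
      have h1 : cc.1 = c := hinjA (congrArg Prod.fst heq)
      have h2 : cc.2 = c' := hinjB (congrArg Prod.snd heq)
      rw [← h1, ← h2]
      exact hcc.2
    · intro h
      rw [hE]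
      have hmem : ((c, c') : (Fin k → K q) × (Fin k → K q)) ∈
          (univ ×ˢ univ).filter (fun cc : (Fin k → K q) × (Fin k → K q) =>
            boolIP (vec q (pc cc.1)) (vec q (pc cc.2 - P)) = 3*k) :=
        Finset.mem_filter.mpr ⟨Finset.mem_product.mpr ⟨mem_univ _, mem_univ _⟩, h⟩
      exact Finset.mem_image.mpr ⟨(c, c'), hmem, rfl⟩
  refine ⟨A, B, E, hAcard, hBcard, hEsub, ?_, ?_, ?_, ?_, ?_⟩
  · -- counting
    set ψ : (Fin k → K q) × Finset (K q) → (Fin (q*q) → Bool) × (Fin (q*q) → Bool) :=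
      fun cS => (vec q (pc cS.1), vec q (pc (cS.1 - rc cS.2) - P)) with hψ
    set G : Finset ((Fin k → K q) × Finset (K q)) := univ ×ˢ F with hG
    have hipG : ∀ c : Fin k → K q, ∀ S ∈ F,
        boolIP (vec q (pc c)) (vec q (pc (c - rc S) - P)) = 3*k := by
      intro c S hSF
      rw [ip_eq]
      have : pc c - (pc (c - rc S) - P) = hS S := by
        rw [← pc_sub, hpcrc S hSF, hr]
        ring
      rw [this, hS_roots, (hmemF S hSF).1]
    have himg : ∀ cS ∈ G, ψ cS ∈ E := by
      intro cS hcS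
      rw [hG, Finset.mem_product] at hcS
      exact (hEmem _ _).mpr (hipG cS.1 cS.2 hcS.2)
    have hinjψ : Set.InjOn ψ G := by
      intro cS h1 cS' h2 heq
      rw [hG] at h1 h2
      rw [Finset.mem_coe, Finset.mem_product] at h1 h2
      have hc : cS.1 = cS'.1 := hinjA (congrArg Prod.fst heq)
      have h2nd := hinjB (congrArg Prod.snd heq)
      have hrceq : rc cS.2 = rc cS'.2 := by
        have h3 := h2nd
        rw [hc] at h3
        exact sub_right_injective h3
      have hreq : r cS.2 = r cS'.2 := by
        rw [← hpcrc _ h1.2, ← hpcrc _ h2.2, hrceq]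
      have hhS : hS cS.2 = hS cS'.2 := by
        rw [hr] at hreq
        exact sub_left_injective hreq
      have hSeq : cS.2 = cS'.2 := by
        rw [← hS_roots cS.2, ← hS_roots cS'.2, hhS]
      exact Prod.ext hc hSeq
    calc q ^ k * N ≤ q ^ k * F.card := Nat.mul_le_mul_left _ hFcard
      _ = G.card := by rw [hG, Finset.card_product, card_univ, hcardfun]
      _ = (G.image ψ).card := (Finset.card_image_of_injOn hinjψ).symm
      _ ≤ E.card := Finset.card_le_card (fun x hx => by
          obtain ⟨cS, hcS, rfl⟩ := Finset.mem_image.mp hx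
          exact himg cS hcS)
  · -- edges have IP exactly 3k
    intro ab hab
    rw [hE] at hab
    obtain ⟨cc, hcc, rfl⟩ := Finset.mem_image.mp hab
    exact (Finset.mem_filter.mp hcc).2
  · -- cross non-edges
    intro a ha b hb hnab
    rw [hA] at ha
    rw [hB] at hb
    obtain ⟨c, -, rfl⟩ := Finset.mem_image.mp ha
    obtain ⟨c', -, rfl⟩ := Finset.mem_image.mp hb
    have hle : boolIP (vec q (pc c)) (vec q (pc c' - P)) ≤ 3*k := by
      rw [ip_eq]
      have := card_roots_le _ (hcrossne c c')
      rw [hcrossdeg c c'] at this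
      exact this
    have hne : boolIP (vec q (pc c)) (vec q (pc c' - P)) ≠ 3*k :=
      fun h => hnab ((hEmem c c').mpr h)
    omega
  · -- same side A
    intro a ha a' ha' hne
    rw [hA] at ha ha'
    obtain ⟨c, -, rfl⟩ := Finset.mem_image.mp ha
    obtain ⟨c', -, rfl⟩ := Finset.mem_image.mp ha'
    have hccne : pc c - pc c' ≠ 0 := by
      intro h0
      exact hne (by rw [sub_eq_zero.mp h0])
    have : boolIP (vec q (pc c)) (vec q (pc c')) ≤ k - 1 := by
      rw [ip_eq]
      have h1 := card_roots_le _ hccne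
      have h2 : (pc c - pc c').natDegree < k := by
        rw [pc_sub]
        exact natDegree_pc_lt hk _
      omega
    omega
  · -- same side B
    intro b hb b' hb' hne
    rw [hB] at hb hb'
    obtain ⟨c, -, rfl⟩ := Finset.mem_image.mp hb
    obtain ⟨c', -, rfl⟩ := Finset.mem_image.mp hb'
    have hccne : pc c - pc c' ≠ 0 := by
      intro h0
      exact hne (by rw [sub_eq_zero.mp h0])
    have hdiff : (pc c - P) - (pc c' - P) = pc c - pc c' := by ring
    have : boolIP (vec q (pc c - P)) (vec q (pc c' - P)) ≤ k - 1 := by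
      rw [ip_eq, hdiff]
      have h1 := card_roots_le _ hccne
      have h2 : (pc c - pc c').natDegree < k := by
        rw [pc_sub]
        exact natDegree_pc_lt hk _
      omega
    omega



noncomputable def kf (delta : ℝ) (x : ℕ) : ℕ := ⌊(x:ℝ) ^ (delta/6)⌋₊

lemma count_bound (delta : ℝ) (hd0 : 0 < delta) (hd1 : delta < 1) (x : ℕ)
    (hx3 : 3 ≤ x)
    (hW : 16/delta + 6 ≤ (x:ℝ)^(delta/6))
    (h6x : 6*(x:ℝ)^(delta/6) ≤ (x:ℝ))
    (hlog : 12 * Real.log 6 / delta ≤ Real.log x) :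
    x ^ (2*(kf delta x)+1) * x ^ ((kf delta x) - ⌊delta * (kf delta x : ℝ)⌋₊)
      ≤ Nat.choose x (3*(kf delta x)) := by
  set k : ℕ := kf delta x with hkdef
  set m : ℕ := ⌊delta * (k : ℝ)⌋₊ with hmdef
  set X : ℝ := (x:ℝ) with hXdef
  have hX0 : (0:ℝ) < X := by rw [hXdef]; exact_mod_cast (by omega : 0 < x)
  have hX1 : (1:ℝ) ≤ X := by rw [hXdef]; exact_mod_cast (by omega : 1 ≤ x)
  set W : ℝ := X ^ (delta/6) with hWdef
  have hdinv : (0:ℝ) < 16/delta := by positivity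
  have hW6 : (6:ℝ) ≤ W := by rw [hWdef]; linarith [hW]
  have hKW : (k:ℝ) ≤ W := by
    rw [hkdef, kf, hWdef, hXdef]
    exact Nat.floor_le (by positivity)
  have hWK : W - 1 ≤ (k:ℝ) := by
    rw [hkdef, kf, hWdef, hXdef]
    exact (Nat.sub_one_lt_floor _).le
  have hk16 : 16/delta ≤ (k:ℝ) := by linarith [hW]
  have hk1R : (1:ℝ) ≤ (k:ℝ) := by
    have h16 : (16:ℝ) ≤ 16/delta := by
      rw [le_div_iff₀ hd0]; nlinarith
    linarith
  have hk1 : 1 ≤ k := by exact_mod_cast hk1R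
  have hdk16 : (16:ℝ) ≤ delta * k := by
    rw [div_le_iff₀ hd0] at hk16; linarith
  have hm1 : 1 ≤ m := by
    rw [hmdef]
    exact Nat.le_floor (by push_cast; linarith)
  have hmk : m ≤ k := by
    rw [hmdef]
    calc ⌊delta * (k:ℝ)⌋₊ ≤ ⌊(k:ℝ)⌋₊ := Nat.floor_mono (by nlinarith)
      _ = k := Nat.floor_natCast k
  have hmd : (m:ℝ) ≤ delta * k := by rw [hmdef]; exact Nat.floor_le (by positivity)
  have hdm : delta * (k:ℝ) - 1 ≤ (m:ℝ) := by rw [hmdef]; exact (Nat.sub_one_lt_floor _).le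
  have h3kX : 3*(k:ℝ) ≤ X/2 := by
    rw [hWdef] at hKW
    linarith [h6x, hKW]
  have h3kx : 3*k < x := by
    have hr : (3*(k:ℝ)) < X := by linarith
    rw [hXdef] at hr
    exact_mod_cast hr
  -- log facts
  have hl6 : (1:ℝ) ≤ Real.log 6 := by
    rw [Real.le_log_iff_exp_le (by norm_num)]
    calc Real.exp 1 ≤ 2.7182818286 := Real.exp_one_lt_d9.le
      _ ≤ 6 := by norm_num
  have hlogX1 : (1:ℝ) ≤ Real.log X := by
    have h1 : (1:ℝ) ≤ 12 * Real.log 6 / delta := by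
      rw [le_div_iff₀ hd0]; nlinarith
    rw [hXdef]; linarith [hlog]
  have hlogKW : Real.log (k:ℝ) ≤ (delta/6) * Real.log X := by
    calc Real.log (k:ℝ) ≤ Real.log W := by
          apply Real.log_le_log (by linarith) hKW
      _ = (delta/6) * Real.log X := by rw [hWdef, Real.log_rpow hX0]
  -- the key real bound : (6k)^(3k) ≤ X^(m-1)
  have hkey : ((6*(k:ℝ)))^(3*k) ≤ X^(m-1) := by
    have hpos1 : (0:ℝ) < 6*(k:ℝ) := by linarith
    have hpos2 : (0:ℝ) < X^(m-1) := by positivity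
    rw [← Real.log_le_log_iff (by positivity) hpos2, Real.log_pow, Real.log_pow]
    have hlog6k : Real.log (6*(k:ℝ)) ≤ Real.log 6 + (delta/6) * Real.log X := by
      rw [Real.log_mul (by norm_num) (by linarith)]
      linarith
    have e1 : 12 * Real.log 6 ≤ delta * Real.log X := by
      rw [div_le_iff₀ hd0] at hlog
      rw [hXdef]; linarith
    have ekm : ((m-1 : ℕ):ℝ) = (m:ℝ) - 1 := by
      push_cast [hm1]; ring
    rw [ekm]
    have hklog : (3*k:ℕ) = ((3:ℝ)*(k:ℝ)) := by push_cast; ring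
    -- bound : 3k * log(6k) ≤ 3k log 6 + (delta/2) k log X
    have hlogX0 : (0:ℝ) ≤ Real.log X := le_trans zero_le_one hlogX1
    have hb1 := mul_le_mul_of_nonneg_left hlog6k (by positivity : (0:ℝ) ≤ 3*(k:ℝ))
    have b1 : ((3*k:ℕ):ℝ) * Real.log (6*(k:ℝ)) ≤
        3*(k:ℝ)*Real.log 6 + (delta/2) * (k:ℝ) * Real.log X := by
      push_cast
      linarith [hb1]
    have hb2 := mul_le_mul_of_nonneg_left e1 (by positivity : (0:ℝ) ≤ (k:ℝ))
    have b2 : 3*(k:ℝ)*Real.log 6 ≤ (delta/4) * (k:ℝ) * Real.log X := by linarith [hb2]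
    have hb3 := mul_le_mul_of_nonneg_right hdk16 hlogX0
    have b3 : (2:ℝ) * Real.log X ≤ (delta/4) * (k:ℝ) * Real.log X := by linarith [hb3]
    have b4 : delta * (k:ℝ) - 2 ≤ (m:ℝ) - 1 := by linarith
    have b5 := mul_le_mul_of_nonneg_right b4 hlogX0
    calc ((3*k:ℕ):ℝ) * Real.log (6*(k:ℝ))
        ≤ (delta/4) * (k:ℝ) * Real.log X + (delta/2) * (k:ℝ) * Real.log X := by linarith
      _ ≤ (delta * (k:ℝ) - 2) * Real.log X := by linarith [b3]
      _ ≤ ((m:ℝ) - 1) * Real.log X := b5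
  -- now the natural-number chain
  have hexp : 2*k+1 + (k - m) = 3*k+1-m := by omega
  rw [← pow_add, hexp]
  -- suffices : x^(3k+1-m) * (3k)^(3k) ≤ (x+1-3k)^(3k)
  have hmain : x^(3*k+1-m) * (3*k)^(3*k) ≤ (x+1-3*k)^(3*k) := by
    set Y : ℝ := ((x+1-3*k : ℕ):ℝ) with hYdef
    have hYhalf : X/2 ≤ Y := by
      have hYeq : Y = X + 1 - 3*(k:ℝ) := by
        rw [hYdef, hXdef]
        push_cast [(show 3*k ≤ x+1 by omega)]
        ring
      rw [hYeq]
      linarith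
    have hY0 : (0:ℝ) ≤ Y := by linarith
    have hXY : X ≤ 2 * Y := by linarith
    have step1 : X^(3*k+1-m) * (6*(k:ℝ))^(3*k) ≤ X^(3*k) := by
      have hsplit : X^(3*k+1-m) * X^(m-1) = X^(3*k) := by
        rw [← pow_add]
        congr 1
        omega
      calc X^(3*k+1-m) * (6*(k:ℝ))^(3*k) ≤ X^(3*k+1-m) * X^(m-1) :=
            mul_le_mul_of_nonneg_left hkey (by positivity)
        _ = X^(3*k) := hsplit
    have step2 : X^(3*k) ≤ Y^(3*k) * 2^(3*k) := by
      calc X^(3*k) ≤ (2*Y)^(3*k) := pow_le_pow_left₀ hX0.le hXY _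
        _ = Y^(3*k) * 2^(3*k) := by rw [mul_pow]; ring
    have step3 : X^(3*k+1-m) * (6*(k:ℝ))^(3*k)
        = (X^(3*k+1-m) * (3*(k:ℝ))^(3*k)) * 2^(3*k) := by
      rw [show (6:ℝ)*(k:ℝ) = (3*(k:ℝ))*2 by ring, mul_pow]
      ring
    have c4 : (X^(3*k+1-m) * (3*(k:ℝ))^(3*k)) * 2^(3*k) ≤ Y^(3*k) * 2^(3*k) := by
      rw [← step3]
      exact le_trans step1 step2
    have c5 : X^(3*k+1-m) * (3*(k:ℝ))^(3*k) ≤ Y^(3*k) :=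
      le_of_mul_le_mul_right c4 (by positivity)
    have hcast : ((x^(3*k+1-m) * (3*k)^(3*k) : ℕ):ℝ) ≤ (((x+1-3*k)^(3*k) : ℕ):ℝ) := by
      rw [Nat.cast_mul, Nat.cast_pow, Nat.cast_pow, Nat.cast_pow]
      have h3c : ((3*k : ℕ):ℝ) = 3*(k:ℝ) := by push_cast; ring
      rw [h3c]
      exact c5
    exact_mod_cast hcast
  have h2 := Nat.pow_sub_le_descFactorial x (3*k)
  have h3 : x.descFactorial (3*k) = Nat.factorial (3*k) * x.choose (3*k) :=
    Nat.descFactorial_eq_factorial_mul_choose x (3*k)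
  have h4 : Nat.factorial (3*k) ≤ (3*k)^(3*k) := Nat.factorial_le_pow _
  have h5 : x^(3*k+1-m) * (3*k)^(3*k) ≤ (3*k)^(3*k) * x.choose (3*k) := by
    calc x^(3*k+1-m) * (3*k)^(3*k) ≤ (x+1-3*k)^(3*k) := hmain
      _ ≤ x.descFactorial (3*k) := h2
      _ = Nat.factorial (3*k) * x.choose (3*k) := h3
      _ ≤ (3*k)^(3*k) * x.choose (3*k) := Nat.mul_le_mul_right _ h4
  have hpow_pos : 0 < (3*k)^(3*k) := Nat.pow_pos (by omega)
  have h5' : x^(3*k+1-m) * (3*k)^(3*k) ≤ x.choose (3*k) * (3*k)^(3*k) := by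
    rw [mul_comm (x.choose (3*k))]
    exact h5
  exact Nat.le_of_mul_le_mul_right h5' hpow_pos



lemma log_six : (1:ℝ) ≤ Real.log 6 := by
  rw [Real.le_log_iff_exp_le (by norm_num)]
  calc Real.exp 1 ≤ 2.7182818286 := Real.exp_one_lt_d9.le
    _ ≤ 6 := by norm_num

lemma perq (delta : ℝ) (hd0 : 0 < delta) (hd1 : delta < 1) (x : ℕ) (hp : Nat.Prime x)
    (hx3 : 3 ≤ x)
    (hW : 16/delta + 6 ≤ (x:ℝ)^(delta/6))
    (h6x : 6*(x:ℝ)^(delta/6) ≤ (x:ℝ))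
    (hlog : 12 * Real.log 6 / delta ≤ Real.log x)
    (hX2 : (2:ℝ)^(18/delta) ≤ (x:ℝ)) :
    ∃ (d : ℕ) (A B : Finset (Fin d → Bool))
        (E : Finset ((Fin d → Bool) × (Fin d → Bool))) (β : ℕ),
      (d : ℝ) ≤ Real.log ((x ^ kf delta x : ℕ) : ℝ) ^ (18/delta) ∧
      A.card = x ^ kf delta x ∧ B.card = x ^ kf delta x ∧
      E ⊆ A ×ˢ B ∧
      1 * (((x ^ kf delta x : ℕ) : ℝ)) ^ (2 - delta) ≤ (E.card : ℝ) ∧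
      0 < β ∧
      (∀ ab ∈ E, boolIP ab.1 ab.2 = β) ∧
      (∀ a ∈ A, ∀ b ∈ B, (a, b) ∉ E → boolIP a b < β) ∧
      (∀ a ∈ A, ∀ a' ∈ A, a ≠ a' → (boolIP a a' : ℝ) < (β:ℝ) / 3) ∧
      (∀ b ∈ B, ∀ b' ∈ B, b ≠ b' → (boolIP b b' : ℝ) < (β:ℝ) / 3) := by
  haveI : Fact (Nat.Prime x) := ⟨hp⟩
  set k : ℕ := kf delta x with hkdef
  set m : ℕ := ⌊delta * (k : ℝ)⌋₊ with hmdef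
  have hX0 : (0:ℝ) < (x:ℝ) := by exact_mod_cast (by omega : 0 < x)
  have hX1 : (1:ℝ) ≤ (x:ℝ) := by exact_mod_cast (by omega : 1 ≤ x)
  have hdinv : (0:ℝ) < 16/delta := by positivity
  have hW6 : (6:ℝ) ≤ (x:ℝ)^(delta/6) := by linarith
  have hk1 : 1 ≤ k := by
    rw [hkdef, kf]
    exact Nat.le_floor (by push_cast; linarith)
  have hKW : (k:ℝ) ≤ (x:ℝ)^(delta/6) := by
    rw [hkdef, kf]
    exact Nat.floor_le (by positivity)
  have hWK : (x:ℝ)^(delta/6) - 1 ≤ (k:ℝ) := by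
    rw [hkdef, kf]
    exact (Nat.sub_one_lt_floor _).le
  have h3k : 3*k < x := by
    have hr : (3*(k:ℝ)) < (x:ℝ) := by linarith
    exact_mod_cast hr
  have hmk : m ≤ k := by
    rw [hmdef]
    calc ⌊delta * (k:ℝ)⌋₊ ≤ ⌊(k:ℝ)⌋₊ := Nat.floor_mono (by nlinarith [(Nat.cast_nonneg k : (0:ℝ) ≤ (k:ℝ))])
      _ = k := Nat.floor_natCast k
  have hmd : (m:ℝ) ≤ delta * k := by rw [hmdef]; exact Nat.floor_le (by positivity)
  have hN : 1 ≤ x^(k-m) := Nat.one_le_pow _ _ (by omega)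
  have hcount := count_bound delta hd0 hd1 x hx3 hW h6x hlog
  rw [← hkdef, ← hmdef] at hcount
  obtain ⟨A, B, E, hA, hB, hsub, hcard, hip, hnon, hsA, hsB⟩ :=
    core x k (x^(k-m)) hk1 h3k hN hcount
  have hlogX1 : (1:ℝ) ≤ Real.log x := by
    have h1 : (1:ℝ) ≤ 12 * Real.log 6 / delta := by
      rw [le_div_iff₀ hd0]; nlinarith [log_six]
    linarith
  have hlognk : Real.log ((x ^ k : ℕ) : ℝ) = (k:ℝ) * Real.log x := by
    push_cast
    rw [Real.log_pow]
  refine ⟨x*x, A, B, E, 3*k, ?_, hA, hB, hsub, ?_, by omega, hip, hnon, ?_, ?_⟩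
  · -- dimension bound
    rw [hlognk]
    have hKX : (x:ℝ)^(delta/6)/2 ≤ (k:ℝ) * Real.log x := by
      have h1 : (x:ℝ)^(delta/6)/2 ≤ (k:ℝ) := by linarith
      have h2 : (k:ℝ) ≤ (k:ℝ) * Real.log x := by nlinarith [(Nat.cast_nonneg k : (0:ℝ) ≤ (k:ℝ))]
      linarith
    have hmono : ((x:ℝ)^(delta/6)/2) ^ ((18:ℝ)/delta) ≤ ((k:ℝ) * Real.log x) ^ ((18:ℝ)/delta) :=
      Real.rpow_le_rpow (by positivity) hKX (by positivity)
    have heq : ((x:ℝ)^(delta/6)/2) ^ ((18:ℝ)/delta)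
        = (x:ℝ)^(3:ℕ) / (2:ℝ)^((18:ℝ)/delta) := by
      rw [Real.div_rpow (by positivity) (by norm_num)]
      congr 1
      rw [← Real.rpow_natCast ((x:ℝ)) 3, ← Real.rpow_mul hX0.le]
      congr 1
      push_cast
      field_simp
      ring
    have hfin : (x:ℝ) * (x:ℝ) ≤ (x:ℝ)^(3:ℕ) / (2:ℝ)^((18:ℝ)/delta) := by
      rw [le_div_iff₀ (by positivity)]
      have : (x:ℝ) * (x:ℝ) * (2:ℝ)^((18:ℝ)/delta) ≤ (x:ℝ) * (x:ℝ) * (x:ℝ) :=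
        mul_le_mul_of_nonneg_left hX2 (by positivity)
      calc (x:ℝ) * (x:ℝ) * (2:ℝ)^((18:ℝ)/delta) ≤ (x:ℝ) * (x:ℝ) * (x:ℝ) := this
        _ = (x:ℝ)^(3:ℕ) := by ring
    calc ((x*x : ℕ):ℝ) = (x:ℝ) * (x:ℝ) := by push_cast; ring
      _ ≤ (x:ℝ)^(3:ℕ) / (2:ℝ)^((18:ℝ)/delta) := hfin
      _ = ((x:ℝ)^(delta/6)/2) ^ ((18:ℝ)/delta) := heq.symm
      _ ≤ ((k:ℝ) * Real.log x) ^ ((18:ℝ)/delta) := hmono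
  · -- edge count
    have hEc : x^(2*k-m) ≤ E.card := by
      have : x^k * x^(k-m) = x^(2*k-m) := by
        rw [← pow_add]
        congr 1
        omega
      omega
    have hEcR : ((x:ℝ))^((2*k-m : ℕ)) ≤ (E.card : ℝ) := by
      exact_mod_cast hEc
    have hexp : (k:ℝ) * (2 - delta) ≤ ((2*k-m : ℕ):ℝ) := by
      have : ((2*k-m : ℕ):ℝ) = 2*(k:ℝ) - (m:ℝ) := by
        push_cast [(show m ≤ 2*k by omega)]
        ring
      rw [this]
      nlinarith [hmd]
    have hrw : (((x ^ k : ℕ) : ℝ)) ^ (2 - delta) = (x:ℝ) ^ ((k:ℝ) * (2 - delta)) := by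
      push_cast
      rw [← Real.rpow_natCast (x:ℝ) k, ← Real.rpow_mul hX0.le]
    rw [one_mul, hrw]
    calc (x:ℝ) ^ ((k:ℝ) * (2 - delta)) ≤ (x:ℝ) ^ (((2*k-m : ℕ):ℝ)) :=
          Real.rpow_le_rpow_of_exponent_le hX1 hexp
      _ = ((x:ℝ))^((2*k-m : ℕ)) := Real.rpow_natCast _ _
      _ ≤ (E.card : ℝ) := hEcR
  · -- same side A
    intro a ha a' ha' hne
    have h := hsA a ha a' ha' hne
    rw [lt_div_iff₀ (by norm_num : (0:ℝ) < 3)]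
    exact_mod_cast (by omega : boolIP a a' * 3 < 3*k)
  · -- same side B
    intro b hb b' hb' hne
    have h := hsB b hb b' hb' hne
    rw [lt_div_iff₀ (by norm_num : (0:ℝ) < 3)]
    exact_mod_cast (by omega : boolIP b b' * 3 < 3*k)


lemma eventually_good (delta : ℝ) (hd0 : 0 < delta) (hd1 : delta < 1) :
    ∃ Q : ℕ, ∀ x : ℕ, Q ≤ x →
      (3 ≤ x ∧ 16/delta + 6 ≤ (x:ℝ)^(delta/6) ∧ 6*(x:ℝ)^(delta/6) ≤ (x:ℝ) ∧
       12 * Real.log 6 / delta ≤ Real.log x ∧ (2:ℝ)^(18/delta) ≤ (x:ℝ)) := by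
  have hcast : Filter.Tendsto (fun x : ℕ => (x:ℝ)) Filter.atTop Filter.atTop :=
    tendsto_natCast_atTop_atTop
  have h1 : Filter.Tendsto (fun x : ℕ => (x:ℝ)^(delta/6)) Filter.atTop Filter.atTop :=
    (tendsto_rpow_atTop (by positivity)).comp hcast
  have h2 : Filter.Tendsto (fun x : ℕ => (x:ℝ)^(1 - delta/6)) Filter.atTop Filter.atTop :=
    (tendsto_rpow_atTop (by linarith)).comp hcast
  have h3 : Filter.Tendsto (fun x : ℕ => Real.log (x:ℝ)) Filter.atTop Filter.atTop :=
    Real.tendsto_log_atTop.comp hcast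
  have e1 := h1.eventually_ge_atTop (16/delta + 6)
  have e2 := h2.eventually_ge_atTop 6
  have e3 := h3.eventually_ge_atTop (12 * Real.log 6 / delta)
  have e4 := hcast.eventually_ge_atTop ((2:ℝ)^(18/delta))
  have e5 : ∀ᶠ x : ℕ in Filter.atTop, 3 ≤ x := Filter.eventually_atTop.mpr ⟨3, fun x h => h⟩
  obtain ⟨Q, hQ⟩ := Filter.eventually_atTop.mp ((((e5.and e1).and e2).and e3).and e4)
  refine ⟨Q, fun x hx => ?_⟩
  obtain ⟨⟨⟨⟨hx3, hW⟩, h6⟩, hlog⟩, hX2⟩ := hQ x hx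
  refine ⟨hx3, hW, ?_, hlog, hX2⟩
  have hX0 : (0:ℝ) < (x:ℝ) := by exact_mod_cast (by omega : 0 < x)
  have hmul : (x:ℝ)^(1 - delta/6) * (x:ℝ)^(delta/6) = (x:ℝ) := by
    rw [← Real.rpow_add hX0]
    norm_num
  have hp : (0:ℝ) < (x:ℝ)^(delta/6) := Real.rpow_pos_of_pos hX0 _
  calc 6*(x:ℝ)^(delta/6) ≤ (x:ℝ)^(1 - delta/6) * (x:ℝ)^(delta/6) :=
        mul_le_mul_of_nonneg_right h6 hp.le
    _ = (x:ℝ) := hmul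

noncomputable def nextPrime (n : ℕ) : ℕ :=
  if h : n = 0 then 2 else Classical.choose (Nat.exists_prime_lt_and_le_two_mul n h)

lemma nextPrime_spec {n : ℕ} (h : n ≠ 0) :
    (nextPrime n).Prime ∧ n < nextPrime n ∧ nextPrime n ≤ 2*n := by
  rw [nextPrime, dif_neg h]
  exact Classical.choose_spec (Nat.exists_prime_lt_and_le_two_mul n h)

lemma kf_ge_one (delta : ℝ) (hd0 : 0 < delta) (x : ℕ)
    (h : 16/delta + 6 ≤ (x:ℝ)^(delta/6)) : 1 ≤ kf delta x := by
  rw [kf]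
  apply Nat.le_floor
  have : (0:ℝ) < 16/delta := by positivity
  push_cast
  linarith

lemma kf_mono (delta : ℝ) (hd0 : 0 < delta) {x y : ℕ} (h : x ≤ y) :
    kf delta x ≤ kf delta y := by
  rw [kf, kf]
  apply Nat.floor_mono
  apply Real.rpow_le_rpow (by positivity) (by exact_mod_cast h) (by positivity)

end Stmt9


/-- for every `0 < δ < 1` there is a log-dense sequence `(n_i)` of sizes
for which there are dense bipartite graphs on Boolean vectors in dimension
`(log n_i)^s` with at least `c · n_i^{2-δ}` edges, gap-IP-realized with gap 3:
edges have inner product exactly `β`, cross non-edges have inner product `< β`,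
and distinct same-side pairs have inner product `< β/3`. -/
theorem stmt_9 (δ : ℝ) (hδ0 : 0 < δ) (hδ1 : δ < 1) :
    ∃ (C c s : ℝ) (n : ℕ → ℕ),
      1 ≤ C ∧ 0 < c ∧ 0 < s ∧
      StrictMono n ∧ (∀ i, 2 ≤ n i) ∧
      (∀ i, Real.log (n (i + 1)) ≤ C * Real.log (n i)) ∧
      (∀ i, ∃ (d : ℕ) (A B : Finset (Fin d → Bool))
          (E : Finset ((Fin d → Bool) × (Fin d → Bool))) (β : ℕ),
        (d : ℝ) ≤ Real.log (n i) ^ s ∧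
        A.card = n i ∧ B.card = n i ∧
        E ⊆ A ×ˢ B ∧
        c * (n i : ℝ) ^ (2 - δ) ≤ (E.card : ℝ) ∧
        0 < β ∧
        (∀ ab ∈ E, boolIP ab.1 ab.2 = β) ∧
        (∀ a ∈ A, ∀ b ∈ B, (a, b) ∉ E → boolIP a b < β) ∧
        (∀ a ∈ A, ∀ a' ∈ A, a ≠ a' → (boolIP a a' : ℝ) < β / 3) ∧
        (∀ b ∈ B, ∀ b' ∈ B, b ≠ b' → (boolIP b b' : ℝ) < β / 3)) := by
  classical
  obtain ⟨Q, hQ⟩ := Stmt9.eventually_good δ hδ0 hδ1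
  -- the sequence of primes
  set qs : ℕ → ℕ := fun i => Stmt9.nextPrime^[i] (Stmt9.nextPrime (Q + 1)) with hqs
  have hqs0 : qs 0 = Stmt9.nextPrime (Q + 1) := rfl
  have hqssucc : ∀ i, qs (i+1) = Stmt9.nextPrime (qs i) := by
    intro i
    rw [hqs]
    exact Function.iterate_succ_apply' _ _ _
  have hbase : ∀ i, (qs i).Prime ∧ Q ≤ qs i := by
    intro i
    induction i with
    | zero =>
      have h := Stmt9.nextPrime_spec (show Q + 1 ≠ 0 by omega)
      rw [hqs0]
      exact ⟨h.1, by omega⟩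
    | succ j ih =>
      have hne : qs j ≠ 0 := by have := ih.1.two_le; omega
      have h := Stmt9.nextPrime_spec hne
      rw [hqssucc]
      exact ⟨h.1, le_trans ih.2 (le_of_lt h.2.1)⟩
  have hlt : ∀ i, qs i < qs (i+1) := by
    intro i
    have hne : qs i ≠ 0 := by have := (hbase i).1.two_le; omega
    rw [hqssucc]
    exact (Stmt9.nextPrime_spec hne).2.1
  have hle2 : ∀ i, qs (i+1) ≤ 2 * qs i := by
    intro i
    have hne : qs i ≠ 0 := by have := (hbase i).1.two_le; omega
    rw [hqssucc]
    exact (Stmt9.nextPrime_spec hne).2.2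
  have hgood := fun i => hQ (qs i) (hbase i).2
  set n : ℕ → ℕ := fun i => qs i ^ Stmt9.kf δ (qs i) with hn
  have hk1 : ∀ i, 1 ≤ Stmt9.kf δ (qs i) :=
    fun i => Stmt9.kf_ge_one δ hδ0 (qs i) (hgood i).2.1
  have hn2 : ∀ i, 2 ≤ n i := by
    intro i
    calc 2 ≤ qs i := (hbase i).1.two_le
      _ ≤ qs i ^ Stmt9.kf δ (qs i) := Nat.le_self_pow (by have := hk1 i; omega) _
  refine ⟨8, 1, 18/δ, n, by norm_num, one_pos, by positivity, ?_, hn2, ?_, ?_⟩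
  · -- strict mono
    apply strictMono_nat_of_lt_succ
    intro i
    have hkm : Stmt9.kf δ (qs i) ≤ Stmt9.kf δ (qs (i+1)) :=
      Stmt9.kf_mono δ hδ0 (le_of_lt (hlt i))
    calc n i = qs i ^ Stmt9.kf δ (qs i) := rfl
      _ < qs (i+1) ^ Stmt9.kf δ (qs i) :=
          Nat.pow_lt_pow_left (hlt i) (by have := hk1 i; omega)
      _ ≤ qs (i+1) ^ Stmt9.kf δ (qs (i+1)) :=
          Nat.pow_le_pow_right (by have := (hbase (i+1)).1.two_le; omega) hkm
  · -- log density
    intro i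
    have hq2 : 2 ≤ qs i := (hbase i).1.two_le
    have hq2' : 2 ≤ qs (i+1) := (hbase (i+1)).1.two_le
    have hX0 : (0:ℝ) < (qs i : ℝ) := by exact_mod_cast (by omega : 0 < qs i)
    have hX0' : (0:ℝ) < (qs (i+1) : ℝ) := by exact_mod_cast (by omega : 0 < qs (i+1))
    have hlog1 : Real.log (n i : ℝ) = (Stmt9.kf δ (qs i) : ℝ) * Real.log (qs i) := by
      rw [hn]
      push_cast
      rw [Real.log_pow]
    have hlog2 : Real.log (n (i+1) : ℝ)
        = (Stmt9.kf δ (qs (i+1)) : ℝ) * Real.log (qs (i+1)) := by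
      rw [hn]
      push_cast
      rw [Real.log_pow]
    rw [hlog1, hlog2]
    -- k' ≤ 4 k
    set k := Stmt9.kf δ (qs i)
    set k' := Stmt9.kf δ (qs (i+1))
    have hkk : (k':ℝ) ≤ 4 * (k:ℝ) := by
      have h1 : (k':ℝ) ≤ (qs (i+1):ℝ)^(δ/6) := Nat.floor_le (by positivity)
      have h2 : (qs (i+1):ℝ)^(δ/6) ≤ ((2 * qs i : ℕ):ℝ)^(δ/6) :=
        Real.rpow_le_rpow hX0'.le (by exact_mod_cast hle2 i) (by positivity)
      have h3 : ((2 * qs i : ℕ):ℝ)^(δ/6) = (2:ℝ)^(δ/6) * (qs i:ℝ)^(δ/6) := by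
        push_cast
        rw [Real.mul_rpow (by norm_num) hX0.le]
      have h4 : (2:ℝ)^(δ/6) ≤ 2 := by
        calc (2:ℝ)^(δ/6) ≤ (2:ℝ)^(1:ℝ) :=
              Real.rpow_le_rpow_of_exponent_le one_le_two (by linarith)
          _ = 2 := Real.rpow_one 2
      have h5 : (qs i:ℝ)^(δ/6) < (k:ℝ) + 1 := Nat.lt_floor_add_one _
      have h6 : (1:ℝ) ≤ (k:ℝ) := by exact_mod_cast hk1 i
      have h7 : (0:ℝ) ≤ (qs i:ℝ)^(δ/6) := by positivity
      calc (k':ℝ) ≤ (2:ℝ)^(δ/6) * (qs i:ℝ)^(δ/6) := by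
            rw [← h3]; exact le_trans h1 h2
        _ ≤ 2 * (qs i:ℝ)^(δ/6) := mul_le_mul_of_nonneg_right h4 h7
        _ ≤ 2 * ((k:ℝ) + 1) := by linarith
        _ ≤ 4 * (k:ℝ) := by linarith
    have hlq : Real.log (qs (i+1)) ≤ 2 * Real.log (qs i) := by
      have h1 : Real.log (qs (i+1)) ≤ Real.log ((2 * qs i : ℕ):ℝ) :=
        Real.log_le_log hX0' (by exact_mod_cast hle2 i)
      have h2 : Real.log ((2 * qs i : ℕ):ℝ) = Real.log 2 + Real.log (qs i) := by
        push_cast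
        rw [Real.log_mul (by norm_num) (by positivity)]
      have h3 : Real.log 2 ≤ Real.log (qs i) :=
        Real.log_le_log (by norm_num) (by exact_mod_cast hq2)
      linarith
    have hlq0 : (0:ℝ) ≤ Real.log (qs (i+1)) :=
      Real.log_nonneg (by exact_mod_cast (by omega : 1 ≤ qs (i+1)))
    have hlq0' : (0:ℝ) ≤ Real.log (qs i) :=
      Real.log_nonneg (by exact_mod_cast (by omega : 1 ≤ qs i))
    have hk0 : (0:ℝ) ≤ 4 * (k:ℝ) := by positivity
    calc (k':ℝ) * Real.log (qs (i+1)) ≤ (4 * (k:ℝ)) * (2 * Real.log (qs i)) :=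
          mul_le_mul hkk hlq hlq0 hk0
      _ = 8 * ((k:ℝ) * Real.log (qs i)) := by ring
  · -- the constructions
    intro i
    obtain ⟨hx3, hW, h6x, hlog, hX2⟩ := hgood i
    exact Stmt9.perq δ hδ0 hδ1 (qs i) (hbase i).1 hx3 hW h6x hlog hX2
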